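/- Let C be a simplicial complex and v a vertex of C, and m ≥ 0. Then the deletion of v from the m-th derived subdivision reduces by non-evasiveness steps to the m-th derived subdivision of the deletion: (sd^m C) − v ↘_NE sd^m(C − v). Consequently, if sd^m Lk(v,C) is non-evasive, then sd^m C ↘_NE sd^m(C − v). -/

import Mathlib

/-- An (abstract, finite) simplicial complex on the vertex set `ℕ`. -/
def IsComplex (C : Finset (Finset ℕ)) : Prop :=
  ∀ σ ∈ C, σ.Nonempty ∧ ∀ τ ⊆ σ, τ.Nonempty → τ ∈ C

/-- The link of a vertex `v` in `C`. -/
def lkv (v : ℕ) (C : Finset (Finset ℕ)) : Finset (Finset ℕ) :=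
  C.filter fun σ => v ∉ σ ∧ insert v σ ∈ C

/-- The deletion of a vertex `v` from `C`. -/
def delv (v : ℕ) (C : Finset (Finset ℕ)) : Finset (Finset ℕ) :=
  C.filter fun σ => v ∉ σ

/-- Non-evasiveness, defined recursively. -/
inductive NonEvasive : Finset (Finset ℕ) → Prop
  | point (v : ℕ) : NonEvasive {({v} : Finset ℕ)}
  | step (C : Finset (Finset ℕ)) (v : ℕ) (hv : ({v} : Finset ℕ) ∈ C)
      (hlk : NonEvasive (lkv v C)) (hdel : NonEvasive (delv v C)) : NonEvasive C

/-- A fixed injective encoding of finite sets of naturals by naturals. -/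
def fenc : Finset ℕ → ℕ := fun s => Encodable.encode s

/-- The derived (barycentric) subdivision: vertices of `sd C` correspond to the faces of `C`,
and faces of `sd C` correspond to chains of faces of `C` under inclusion. -/
def sd (C : Finset (Finset ℕ)) : Finset (Finset ℕ) :=
  (C.powerset.filter fun S => S.Nonempty ∧ ∀ σ ∈ S, ∀ τ ∈ S, σ ⊆ τ ∨ τ ⊆ σ).image
    fun S => S.image fenc

/-- A non-evasiveness step: deletion of a vertex whose link is non-evasive. -/
def NEStep (C C' : Finset (Finset ℕ)) : Prop :=
  ∃ v : ℕ, ({v} : Finset ℕ) ∈ C ∧ NonEvasive (lkv v C) ∧ C' = delv v C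

/-- `C ↘_NE C'` : reduction by non-evasiveness steps. -/
def NERed : Finset (Finset ℕ) → Finset (Finset ℕ) → Prop :=
  Relation.ReflTransGen NEStep

/-- The vertex of `sd^[m] C` corresponding to a vertex `v` of `C`. -/
def vIter : ℕ → ℕ → ℕ
  | 0, v => v
  | m + 1, v => fenc {vIter m v}

-- ===== auxiliary lemmas =====
lemma fenc_inj : Function.Injective fenc := fun _ _ h => Encodable.encode_injective h

lemma image_fenc_inj : Function.Injective (Finset.image fenc) :=
  Finset.image_injective fenc_inj

noncomputable def fdec : ℕ → Finset ℕ := fun n => (Encodable.decode n).getD ∅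

lemma fdec_fenc (s : Finset ℕ) : fdec (fenc s) = s := by
  simp [fdec, fenc]

def IsChainF (S : Finset (Finset ℕ)) : Prop := ∀ σ ∈ S, ∀ τ ∈ S, σ ⊆ τ ∨ τ ⊆ σ

lemma mem_sd {A : Finset (Finset ℕ)} {T : Finset ℕ} :
    T ∈ sd A ↔ ∃ S, S ⊆ A ∧ S.Nonempty ∧ IsChainF S ∧ T = S.image fenc := by
  simp only [sd, Finset.mem_image, Finset.mem_filter, Finset.mem_powerset, IsChainF]
  constructor
  · rintro ⟨S, ⟨h1, h2, h3⟩, rfl⟩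
    exact ⟨S, h1, h2, h3, rfl⟩
  · rintro ⟨S, h1, h2, h3, rfl⟩
    exact ⟨S, ⟨h1, h2, h3⟩, rfl⟩

lemma singleton_mem_sd {A : Finset (Finset ℕ)} {σ : Finset ℕ} (h : σ ∈ A) :
    ({fenc σ} : Finset ℕ) ∈ sd A := by
  refine mem_sd.2 ⟨{σ}, by simpa, ⟨σ, by simp⟩, ?_, by simp⟩
  intro a ha b hb
  simp only [Finset.mem_singleton] at ha hb
  subst ha; subst hb; exact Or.inl subset_rfl

lemma isComplex_sd (A : Finset (Finset ℕ)) : IsComplex (sd A) := by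
  intro T hT
  obtain ⟨S, hSA, hne, hch, rfl⟩ := mem_sd.1 hT
  refine ⟨hne.image _, ?_⟩
  intro τ hτ hτne
  refine mem_sd.2 ⟨S.filter (fenc · ∈ τ), fun x hx => hSA (Finset.mem_filter.1 hx).1, ?_, ?_, ?_⟩
  · obtain ⟨x, hx⟩ := hτne
    obtain ⟨s, hs, rfl⟩ := Finset.mem_image.1 (hτ hx)
    exact ⟨s, Finset.mem_filter.2 ⟨hs, hx⟩⟩
  · intro a ha b hb
    exact hch a (Finset.mem_filter.1 ha).1 b (Finset.mem_filter.1 hb).1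
  · ext x
    simp only [Finset.mem_image, Finset.mem_filter]
    constructor
    · intro hx
      obtain ⟨s, hs, rfl⟩ := Finset.mem_image.1 (hτ hx)
      exact ⟨s, ⟨hs, hx⟩, rfl⟩
    · rintro ⟨s, ⟨hs, hsτ⟩, rfl⟩
      exact hsτ

lemma delv_sd (A : Finset (Finset ℕ)) (σ : Finset ℕ) :
    delv (fenc σ) (sd A) = sd (A.erase σ) := by
  ext T
  simp only [delv, Finset.mem_filter, mem_sd]
  constructor
  · rintro ⟨⟨S, hSA, hne, hch, rfl⟩, hv⟩
    refine ⟨S, fun τ hτ => Finset.mem_erase.2 ⟨?_, hSA hτ⟩, hne, hch, rfl⟩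
    rintro rfl
    exact hv (Finset.mem_image_of_mem _ hτ)
  · rintro ⟨S, hSA, hne, hch, rfl⟩
    refine ⟨⟨S, fun τ hτ => (Finset.mem_erase.1 (hSA hτ)).2, hne, hch, rfl⟩, ?_⟩
    intro h
    obtain ⟨τ, hτ, hfe⟩ := Finset.mem_image.1 h
    exact (Finset.mem_erase.1 (hSA hτ)).1 (fenc_inj hfe)

lemma lkv_sd (A : Finset (Finset ℕ)) (σ : Finset ℕ) (hσA : σ ∈ A) :
    lkv (fenc σ) (sd A) = sd (A.filter fun τ => τ ≠ σ ∧ (τ ⊆ σ ∨ σ ⊆ τ)) := by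
  ext T
  simp only [lkv, Finset.mem_filter, mem_sd]
  constructor
  · rintro ⟨⟨S, hSA, hne, hch, rfl⟩, hv, S', hS'A, hne', hch', hEq⟩
    have hS' : S' = insert σ S := by
      apply image_fenc_inj
      rw [← hEq, Finset.image_insert]
    subst hS'
    refine ⟨S, ?_, hne, hch, rfl⟩
    intro τ hτ
    refine Finset.mem_filter.2 ⟨hSA hτ, ?_, ?_⟩
    · rintro rfl; exact hv (Finset.mem_image_of_mem _ hτ)
    · exact (hch' σ (Finset.mem_insert_self _ _) τ (Finset.mem_insert_of_mem hτ)).symm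
  · rintro ⟨S, hSB, hne, hch, rfl⟩
    have hSA : S ⊆ A := fun x hx => (Finset.mem_filter.1 (hSB hx)).1
    refine ⟨⟨S, hSA, hne, hch, rfl⟩, ?_, ?_⟩
    · intro h
      obtain ⟨τ, hτ, hfe⟩ := Finset.mem_image.1 h
      exact (Finset.mem_filter.1 (hSB hτ)).2.1 (fenc_inj hfe)
    · refine ⟨insert σ S, Finset.insert_subset hσA hSA, ⟨σ, Finset.mem_insert_self _ _⟩, ?_, ?_⟩
      · intro a ha b hb
        rcases Finset.mem_insert.1 ha with ha | ha
        · rcases Finset.mem_insert.1 hb with hb | hb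
          · exact Or.inl (ha ▸ hb ▸ subset_rfl)
          · exact ha ▸ ((Finset.mem_filter.1 (hSB hb)).2.2).symm
        · rcases Finset.mem_insert.1 hb with hb | hb
          · exact hb ▸ (Finset.mem_filter.1 (hSB ha)).2.2
          · exact hch a ha b hb
      · rw [Finset.image_insert]

lemma complex_delv (v : ℕ) (C : Finset (Finset ℕ)) (hC : IsComplex C) : IsComplex (delv v C) := by
  intro σ hσ
  obtain ⟨hσC, hvσ⟩ := Finset.mem_filter.1 hσ
  refine ⟨(hC σ hσC).1, fun τ hτ hτne => Finset.mem_filter.2 ⟨(hC σ hσC).2 τ hτ hτne, fun h => hvσ (hτ h)⟩⟩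

lemma complex_lkv (v : ℕ) (C : Finset (Finset ℕ)) (hC : IsComplex C) : IsComplex (lkv v C) := by
  intro σ hσ
  obtain ⟨hσC, hvσ, hins⟩ := Finset.mem_filter.1 hσ
  refine ⟨(hC σ hσC).1, fun τ hτ hτne => Finset.mem_filter.2 ⟨(hC σ hσC).2 τ hτ hτne, fun h => hvσ (hτ h), ?_⟩⟩
  exact (hC _ hins).2 (insert v τ) (Finset.insert_subset_insert _ hτ) ⟨v, Finset.mem_insert_self _ _⟩

lemma cone_nonEvasive : ∀ (n : ℕ) (C : Finset (Finset ℕ)) (a : ℕ), C.card ≤ n → IsComplex C →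
    ({a} : Finset ℕ) ∈ C → (∀ σ ∈ C, insert a σ ∈ C) → NonEvasive C := by
  intro n
  induction n with
  | zero =>
    intro C a hcard _ ha _
    exact absurd (Finset.card_eq_zero.1 (Nat.le_zero.1 hcard) ▸ ha) (Finset.notMem_empty _)
  | succ n ih =>
    intro C a hcard hC ha hcone
    by_cases hall : ∀ σ ∈ C, σ = {a}
    · have hCeq : C = {({a} : Finset ℕ)} := by
        apply Finset.eq_singleton_iff_unique_mem.2 ⟨ha, hall⟩
      rw [hCeq]; exact NonEvasive.point a
    · push_neg at hall
      obtain ⟨σ, hσ, hσa⟩ := hall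
      have hσne := (hC σ hσ).1
      have hw : ∃ w ∈ σ, w ≠ a := by
        by_contra h
        push_neg at h
        refine hσa (Finset.eq_singleton_iff_unique_mem.2 ⟨?_, h⟩)
        obtain ⟨x, hx⟩ := hσne
        exact (h x hx) ▸ hx
      obtain ⟨w, hwσ, hwa⟩ := hw
      have hwC : ({w} : Finset ℕ) ∈ C :=
        (hC σ hσ).2 {w} (Finset.singleton_subset_iff.2 hwσ) ⟨w, Finset.mem_singleton_self w⟩
      have hdelsub : delv w C ⊆ C.erase {w} := by
        intro τ hτ
        obtain ⟨hτC, hwτ⟩ := Finset.mem_filter.1 hτ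
        exact Finset.mem_erase.2 ⟨fun h => hwτ (h ▸ Finset.mem_singleton_self w), hτC⟩
      have hdelcard : (delv w C).card ≤ n := by
        calc (delv w C).card ≤ (C.erase {w}).card := Finset.card_le_card hdelsub
        _ = C.card - 1 := Finset.card_erase_of_mem hwC
        _ ≤ n := by omega
      have hlksub : lkv w C ⊆ delv w C := by
        intro τ hτ
        obtain ⟨hτC, hwτ, _⟩ := Finset.mem_filter.1 hτ
        exact Finset.mem_filter.2 ⟨hτC, hwτ⟩
      refine NonEvasive.step C w hwC ?_ ?_
      · refine ih (lkv w C) a (le_trans (Finset.card_le_card hlksub) hdelcard)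
          (complex_lkv w C hC) ?_ ?_
        · refine Finset.mem_filter.2 ⟨ha, fun h => hwa (Finset.mem_singleton.1 h), ?_⟩
          have := hcone {w} hwC
          rwa [Finset.pair_comm] at this
        · intro τ hτ
          obtain ⟨hτC, hwτ, hins⟩ := Finset.mem_filter.1 hτ
          refine Finset.mem_filter.2 ⟨hcone τ hτC, ?_, ?_⟩
          · simp only [Finset.mem_insert]
            rintro (rfl | h)
            · exact hwa rfl
            · exact hwτ h
          · rw [Finset.insert_comm]
            exact hcone _ hins
      · refine ih (delv w C) a hdelcard (complex_delv w C hC) ?_ ?_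
        · exact Finset.mem_filter.2 ⟨ha, fun h => hwa (Finset.mem_singleton.1 h)⟩
        · intro τ hτ
          obtain ⟨hτC, hwτ⟩ := Finset.mem_filter.1 hτ
          refine Finset.mem_filter.2 ⟨hcone τ hτC, ?_⟩
          simp only [Finset.mem_insert]
          rintro (rfl | h)
          · exact hwa rfl
          · exact hwτ h

lemma neRed_refl (C : Finset (Finset ℕ)) : NERed C C := Relation.ReflTransGen.refl
lemma neRed_trans {a b c : Finset (Finset ℕ)} (h1 : NERed a b) (h2 : NERed b c) : NERed a c :=
  Relation.ReflTransGen.trans h1 h2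
lemma neRed_single {a b : Finset (Finset ℕ)} (h : NEStep a b) : NERed a b :=
  Relation.ReflTransGen.single h
lemma neRed_head {a b c : Finset (Finset ℕ)} (h : NEStep a b) (h2 : NERed b c) : NERed a c :=
  Relation.ReflTransGen.head h h2

lemma neRed_nonEvasive : ∀ {C C' : Finset (Finset ℕ)}, NERed C C' → NonEvasive C' → NonEvasive C := by
  intro C C' h
  induction h with
  | refl => exact id
  | tail hab hbc ih =>
    intro hc
    obtain ⟨v, hv, hlk, rfl⟩ := hbc
    exact ih (NonEvasive.step _ v hv hlk hc)

lemma neStep_isComplex {a b : Finset (Finset ℕ)} (h : NEStep a b) (ha : IsComplex a) : IsComplex b := by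
  obtain ⟨v, _, _, rfl⟩ := h
  exact complex_delv v a ha

lemma neRed_isComplex : ∀ {a b : Finset (Finset ℕ)}, NERed a b → IsComplex a → IsComplex b := by
  intro a b h
  induction h with
  | refl => exact id
  | tail hab hbc ih => exact fun h' => neStep_isComplex hbc (ih h')

lemma sd_union_red (v : ℕ) (G : Finset (Finset ℕ)) (hG : ∀ τ ∈ G, v ∉ τ) :
    ∀ (n : ℕ) (F : Finset (Finset ℕ)), F.card ≤ n →
      (∀ σ ∈ F, v ∈ σ ∧ σ.erase v ∈ G) →
      NERed (sd (G ∪ F)) (sd G) := by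
  intro n
  induction n with
  | zero =>
    intro F hcard _
    rw [Finset.card_eq_zero.1 (Nat.le_zero.1 hcard), Finset.union_empty]
    exact neRed_refl _
  | succ n ih =>
    intro F hcard hF
    rcases Finset.eq_empty_or_nonempty F with rfl | hne
    · rw [Finset.union_empty]; exact neRed_refl _
    · obtain ⟨σ, hσF, hmin⟩ := Finset.exists_min_image F Finset.card hne
      have hσv : v ∈ σ := (hF σ hσF).1
      have hρG : σ.erase v ∈ G := (hF σ hσF).2
      have hσG : σ ∉ G := fun h => hG σ h hσv
      have herase : (G ∪ F).erase σ = G ∪ F.erase σ := by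
        rw [Finset.erase_union_distrib, Finset.erase_eq_of_notMem hσG]
      have hstep : NEStep (sd (G ∪ F)) (sd (G ∪ F.erase σ)) := by
        refine ⟨fenc σ, singleton_mem_sd (Finset.mem_union_right _ hσF), ?_, ?_⟩
        · rw [lkv_sd _ _ (Finset.mem_union_right _ hσF)]
          set B := (G ∪ F).filter (fun τ => τ ≠ σ ∧ (τ ⊆ σ ∨ σ ⊆ τ)) with hB
          have hρB : σ.erase v ∈ B := by
            refine Finset.mem_filter.2 ⟨Finset.mem_union_left _ hρG, ?_, Or.inl (Finset.erase_subset _ _)⟩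
            intro h
            have : v ∉ σ := h ▸ Finset.notMem_erase v σ
            exact this hσv
          have hkey : ∀ τ ∈ B, τ ⊆ σ.erase v ∨ σ.erase v ⊆ τ := by
            intro τ hτ
            obtain ⟨hτGF, hτσ, hcomp⟩ := Finset.mem_filter.1 hτ
            rcases hcomp with hsub | hsup
            · left
              rcases Finset.mem_union.1 hτGF with hτG | hτF
              · exact Finset.subset_erase.2 ⟨hsub, hG τ hτG⟩
              · exfalso
                have h1 : τ.card < σ.card :=
                  Finset.card_lt_card (Finset.ssubset_iff_subset_ne.2 ⟨hsub, hτσ⟩)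
                exact absurd (hmin τ hτF) (by omega)
            · exact Or.inr (le_trans (Finset.erase_subset _ _) hsup)
          refine cone_nonEvasive (sd B).card (sd B) (fenc (σ.erase v)) le_rfl (isComplex_sd B)
            (singleton_mem_sd hρB) ?_
          intro T hT
          obtain ⟨S, hSB, hSne, hch, rfl⟩ := mem_sd.1 hT
          refine mem_sd.2 ⟨insert (σ.erase v) S, Finset.insert_subset hρB hSB,
            ⟨_, Finset.mem_insert_self _ _⟩, ?_, by rw [Finset.image_insert]⟩
          intro a ha b hb
          rcases Finset.mem_insert.1 ha with ha | ha
          · rcases Finset.mem_insert.1 hb with hb | hb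
            · exact Or.inl (ha ▸ hb ▸ subset_rfl)
            · exact ha ▸ (hkey b (hSB hb)).symm
          · rcases Finset.mem_insert.1 hb with hb | hb
            · exact hb ▸ hkey a (hSB ha)
            · exact hch a ha b hb
        · rw [delv_sd, herase]
      refine neRed_head hstep (ih (F.erase σ) ?_ ?_)
      · have := Finset.card_erase_of_mem hσF
        have := Finset.card_pos.2 hne
        omega
      · intro τ hτ
        exact hF τ (Finset.mem_of_mem_erase hτ)

lemma core_red (C : Finset (Finset ℕ)) (v : ℕ) (hC : IsComplex C) :
    NERed (delv (fenc {v}) (sd C)) (sd (delv v C)) := by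
  rw [delv_sd]
  have hsplit : C.erase {v} = delv v C ∪ C.filter (fun σ => v ∈ σ ∧ σ ≠ {v}) := by
    ext σ
    simp only [Finset.mem_erase, Finset.mem_union, delv, Finset.mem_filter]
    constructor
    · rintro ⟨hne, hσ⟩
      by_cases h : v ∈ σ
      · exact Or.inr ⟨hσ, h, hne⟩
      · exact Or.inl ⟨hσ, h⟩
    · rintro (⟨hσ, h⟩ | ⟨hσ, h, hne⟩)
      · exact ⟨fun he => h (he ▸ Finset.mem_singleton_self v), hσ⟩
      · exact ⟨hne, hσ⟩
  rw [hsplit]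
  refine sd_union_red v (delv v C) (fun τ hτ => (Finset.mem_filter.1 hτ).2) _ _ le_rfl ?_
  intro σ hσ
  obtain ⟨hσC, hσv, hσne⟩ := Finset.mem_filter.1 hσ
  refine ⟨hσv, Finset.mem_filter.2 ⟨?_, Finset.notMem_erase _ _⟩⟩
  refine (hC σ hσC).2 (σ.erase v) (Finset.erase_subset _ _) ?_
  rcases Finset.eq_empty_or_nonempty (σ.erase v) with he | h
  · exfalso
    refine hσne ?_
    apply Finset.eq_singleton_iff_unique_mem.2 ⟨hσv, ?_⟩
    intro x hx
    by_contra hxv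
    exact (Finset.notMem_empty x) (he ▸ Finset.mem_erase.2 ⟨hxv, hx⟩)
  · exact h

def mapV (f : ℕ → ℕ) (C : Finset (Finset ℕ)) : Finset (Finset ℕ) := C.image (Finset.image f)

def verts (C : Finset (Finset ℕ)) : Set ℕ := {x | ∃ σ ∈ C, x ∈ σ}

lemma verts_mono {C D : Finset (Finset ℕ)} (h : C ⊆ D) : verts C ⊆ verts D := by
  rintro x ⟨σ, hσ, hx⟩; exact ⟨σ, h hσ, hx⟩

lemma verts_filter {C : Finset (Finset ℕ)} {p : Finset ℕ → Prop} [DecidablePred p] :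
    verts (C.filter p) ⊆ verts C :=
  verts_mono (Finset.filter_subset _ _)

lemma image_inj_of_injOn {f : ℕ → ℕ} {V : Set ℕ} (hf : Set.InjOn f V)
    {s t : Finset ℕ} (hs : ↑s ⊆ V) (ht : ↑t ⊆ V) (h : s.image f = t.image f) : s = t := by
  ext x
  constructor
  · intro hx
    have : f x ∈ t.image f := h ▸ Finset.mem_image_of_mem f hx
    obtain ⟨y, hy, hxy⟩ := Finset.mem_image.1 this
    exact hf (ht hy) (hs hx) hxy ▸ hy
  · intro hx
    have : f x ∈ s.image f := h.symm ▸ Finset.mem_image_of_mem f hx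
    obtain ⟨y, hy, hxy⟩ := Finset.mem_image.1 this
    exact hf (hs hy) (ht hx) hxy ▸ hy

lemma subset_verts {C : Finset (Finset ℕ)} {σ : Finset ℕ} (h : σ ∈ C) : ↑σ ⊆ verts C :=
  fun x hx => ⟨σ, h, hx⟩

lemma map_delv {f : ℕ → ℕ} {C : Finset (Finset ℕ)} {v : ℕ}
    (hf : Set.InjOn f (verts C)) (hv : v ∈ verts C) :
    mapV f (delv v C) = delv (f v) (mapV f C) := by
  ext ρ
  simp only [mapV, delv, Finset.mem_image, Finset.mem_filter]
  constructor
  · rintro ⟨σ, ⟨hσC, hvσ⟩, rfl⟩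
    refine ⟨⟨σ, hσC, rfl⟩, ?_⟩
    intro h
    obtain ⟨y, hy, hxy⟩ := Finset.mem_image.1 h
    exact hvσ (hf (subset_verts hσC hy) hv hxy ▸ hy)
  · rintro ⟨⟨σ, hσC, rfl⟩, hfv⟩
    exact ⟨σ, ⟨hσC, fun h => hfv (Finset.mem_image_of_mem f h)⟩, rfl⟩

lemma map_lkv {f : ℕ → ℕ} {C : Finset (Finset ℕ)} {v : ℕ}
    (hf : Set.InjOn f (verts C)) (hv : v ∈ verts C) :
    mapV f (lkv v C) = lkv (f v) (mapV f C) := by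
  ext ρ
  simp only [mapV, lkv, Finset.mem_image, Finset.mem_filter]
  constructor
  · rintro ⟨σ, ⟨hσC, hvσ, hins⟩, rfl⟩
    refine ⟨⟨σ, hσC, rfl⟩, ?_, ?_⟩
    · intro h
      obtain ⟨y, hy, hxy⟩ := Finset.mem_image.1 h
      exact hvσ (hf (subset_verts hσC hy) hv hxy ▸ hy)
    · exact ⟨insert v σ, hins, by rw [Finset.image_insert]⟩
  · rintro ⟨⟨σ, hσC, rfl⟩, hfv, τ, hτC, hτeq⟩
    have hvσ : v ∉ σ := fun h => hfv (Finset.mem_image_of_mem f h)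
    have hτ : τ = insert v σ := by
      refine image_inj_of_injOn hf (subset_verts hτC) ?_ ?_
      · intro x hx
        rcases Finset.mem_insert.1 (by exact_mod_cast hx) with h | h
        · exact h ▸ hv
        · exact subset_verts hσC h
      · rw [Finset.image_insert, hτeq]
    exact ⟨σ, ⟨hσC, hvσ, hτ ▸ hτC⟩, rfl⟩

lemma relabel_nonEvasive : ∀ {C : Finset (Finset ℕ)}, NonEvasive C →
    ∀ (f : ℕ → ℕ), Set.InjOn f (verts C) → NonEvasive (mapV f C) := by
  intro C h
  induction h with
  | point v =>
    intro f _
    have : mapV f {({v} : Finset ℕ)} = {({f v} : Finset ℕ)} := by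
      simp [mapV]
    rw [this]
    exact NonEvasive.point (f v)
  | step C v hv hlk hdel ihlk ihdel =>
    intro f hf
    have hvV : v ∈ verts C := ⟨{v}, hv, Finset.mem_singleton_self v⟩
    refine NonEvasive.step _ (f v) ?_ ?_ ?_
    · have : ({f v} : Finset ℕ) = Finset.image f {v} := by simp
      rw [this]
      exact Finset.mem_image_of_mem _ hv
    · rw [← map_lkv hf hvV]
      exact ihlk f (hf.mono (by unfold lkv; exact verts_filter))
    · rw [← map_delv hf hvV]
      exact ihdel f (hf.mono (by unfold delv; exact verts_filter))

lemma verts_sd {A : Finset (Finset ℕ)} {x : ℕ} :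
    x ∈ verts (sd A) ↔ ∃ σ ∈ A, x = fenc σ := by
  constructor
  · rintro ⟨T, hT, hx⟩
    obtain ⟨S, hSA, _, _, rfl⟩ := mem_sd.1 hT
    obtain ⟨σ, hσ, rfl⟩ := Finset.mem_image.1 hx
    exact ⟨σ, hSA hσ, rfl⟩
  · rintro ⟨σ, hσ, rfl⟩
    exact ⟨{fenc σ}, singleton_mem_sd hσ, Finset.mem_singleton_self _⟩

lemma sd_image (A : Finset (Finset ℕ)) (h : Finset ℕ → Finset ℕ)
    (hm : ∀ σ ∈ A, ∀ τ ∈ A, (σ ⊆ τ ↔ h σ ⊆ h τ)) :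
    sd (A.image h) = mapV (fun n => fenc (h (fdec n))) (sd A) ∧
      Set.InjOn (fun n => fenc (h (fdec n))) (verts (sd A)) := by
  set g : ℕ → ℕ := fun n => fenc (h (fdec n)) with hg
  have hinj : ∀ σ ∈ A, ∀ τ ∈ A, h σ = h τ → σ = τ := by
    intro σ hσ τ hτ he
    exact subset_antisymm ((hm σ hσ τ hτ).2 (he ▸ subset_rfl)) ((hm τ hτ σ hσ).2 (he ▸ subset_rfl))
  have hgf : ∀ (S : Finset (Finset ℕ)), S ⊆ A →
      (S.image fenc).image g = (S.image h).image fenc := by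
    intro S hSA
    rw [Finset.image_image, Finset.image_image]
    apply Finset.image_congr
    intro σ hσ
    simp only [Function.comp_apply, hg, fdec_fenc]
  constructor
  · ext T
    simp only [mapV, Finset.mem_image]
    constructor
    · intro hT
      obtain ⟨S', hS'A, hne', hch', rfl⟩ := mem_sd.1 hT
      set S : Finset (Finset ℕ) := A.filter (fun σ => h σ ∈ S') with hSdef
      have hSA : S ⊆ A := Finset.filter_subset _ _
      have him : S.image h = S' := by
        ext ρ
        simp only [Finset.mem_image, hSdef, Finset.mem_filter]
        constructor
        · rintro ⟨σ, ⟨_, hσ⟩, rfl⟩; exact hσ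
        · intro hρ
          obtain ⟨σ, hσA, rfl⟩ := Finset.mem_image.1 (hS'A hρ)
          exact ⟨σ, ⟨hσA, hρ⟩, rfl⟩
      refine ⟨S.image fenc, mem_sd.2 ⟨S, hSA, ?_, ?_, rfl⟩, ?_⟩
      · obtain ⟨ρ, hρ⟩ := hne'
        obtain ⟨σ, hσA, rfl⟩ := Finset.mem_image.1 (hS'A hρ)
        exact ⟨σ, Finset.mem_filter.2 ⟨hσA, hρ⟩⟩
      · intro a ha b hb
        have h1 := hch' (h a) (him ▸ Finset.mem_image_of_mem h ha)
          (h b) (him ▸ Finset.mem_image_of_mem h hb)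
        rcases h1 with h1 | h1
        · exact Or.inl ((hm a (hSA ha) b (hSA hb)).2 h1)
        · exact Or.inr ((hm b (hSA hb) a (hSA ha)).2 h1)
      · rw [hgf S hSA, him]
    · rintro ⟨U, hU, rfl⟩
      obtain ⟨S, hSA, hne, hch, rfl⟩ := mem_sd.1 hU
      refine mem_sd.2 ⟨S.image h, Finset.image_subset_image hSA, hne.image _, ?_, (hgf S hSA)⟩
      intro a ha b hb
      obtain ⟨a', ha', rfl⟩ := Finset.mem_image.1 ha
      obtain ⟨b', hb', rfl⟩ := Finset.mem_image.1 hb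
      rcases hch a' ha' b' hb' with h1 | h1
      · exact Or.inl ((hm a' (hSA ha') b' (hSA hb')).1 h1)
      · exact Or.inr ((hm b' (hSA hb') a' (hSA ha')).1 h1)
  · intro x hx y hy hxy
    obtain ⟨σ, hσA, rfl⟩ := verts_sd.1 hx
    obtain ⟨τ, hτA, rfl⟩ := verts_sd.1 hy
    simp only [hg, fdec_fenc] at hxy
    rw [hinj σ hσA τ hτA (fenc_inj hxy)]

lemma sd_mapV (A : Finset (Finset ℕ)) (f : ℕ → ℕ) (hf : Set.InjOn f (verts A)) :
    ∃ g, sd (mapV f A) = mapV g (sd A) ∧ Set.InjOn g (verts (sd A)) := by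
  have hm : ∀ σ ∈ A, ∀ τ ∈ A, (σ ⊆ τ ↔ σ.image f ⊆ τ.image f) := by
    intro σ hσ τ hτ
    constructor
    · exact fun hsub => Finset.image_subset_image hsub
    · intro hsub x hx
      have : f x ∈ τ.image f := hsub (Finset.mem_image_of_mem f hx)
      obtain ⟨y, hy, hxy⟩ := Finset.mem_image.1 this
      exact hf (subset_verts hτ hy) (subset_verts hσ hx) hxy ▸ hy
  obtain ⟨heq, hinj⟩ := sd_image A (Finset.image f) hm
  exact ⟨_, heq, hinj⟩

lemma erase_nonempty_of {σ : Finset ℕ} {v : ℕ} (hv : v ∈ σ) (hne : σ ≠ {v}) :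
    (σ.erase v).Nonempty := by
  rcases Finset.eq_empty_or_nonempty (σ.erase v) with he | h
  · exfalso
    refine hne (Finset.eq_singleton_iff_unique_mem.2 ⟨hv, ?_⟩)
    intro x hx
    by_contra hxv
    exact (Finset.notMem_empty x) (he ▸ Finset.mem_erase.2 ⟨hxv, hx⟩)
  · exact h

lemma lkv_fenc_singleton (C : Finset (Finset ℕ)) (v : ℕ) (hC : IsComplex C)
    (hv : ({v} : Finset ℕ) ∈ C) :
    ∃ g, lkv (fenc {v}) (sd C) = mapV g (sd (lkv v C)) ∧
      Set.InjOn g (verts (sd (lkv v C))) := by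
  have hB : C.filter (fun τ => τ ≠ {v} ∧ (τ ⊆ {v} ∨ {v} ⊆ τ)) =
      (lkv v C).image (fun σ => insert v σ) := by
    ext τ
    simp only [Finset.mem_filter, Finset.mem_image, lkv]
    constructor
    · rintro ⟨hτC, hτne, hcomp⟩
      have hvτ : v ∈ τ := by
        rcases hcomp with hsub | hsup
        · exfalso
          rcases Finset.subset_singleton_iff.1 hsub with rfl | rfl
          · exact (hC _ hτC).1.ne_empty rfl
          · exact hτne rfl
        · exact Finset.singleton_subset_iff.1 hsup
      refine ⟨τ.erase v, ⟨?_, Finset.notMem_erase _ _, ?_⟩, Finset.insert_erase hvτ⟩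
      · exact (hC τ hτC).2 _ (Finset.erase_subset _ _) (erase_nonempty_of hvτ hτne)
      · rw [Finset.insert_erase hvτ]; exact hτC
    · rintro ⟨σ, ⟨hσC, hvσ, hins⟩, rfl⟩
      refine ⟨hins, ?_, Or.inr (Finset.singleton_subset_iff.2 (Finset.mem_insert_self _ _))⟩
      intro he
      obtain ⟨x, hx⟩ := (hC σ hσC).1
      have : x ∈ ({v} : Finset ℕ) := he ▸ Finset.mem_insert_of_mem hx
      exact hvσ ((Finset.mem_singleton.1 this) ▸ hx)
  have hm : ∀ σ ∈ lkv v C, ∀ τ ∈ lkv v C, (σ ⊆ τ ↔ insert v σ ⊆ insert v τ) := by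
    intro σ hσ τ hτ
    constructor
    · exact fun hsub => Finset.insert_subset_insert _ hsub
    · intro hsub x hx
      have hvσ : v ∉ σ := (Finset.mem_filter.1 hσ).2.1
      have : x ∈ insert v τ := hsub (Finset.mem_insert_of_mem hx)
      rcases Finset.mem_insert.1 this with rfl | h
      · exact absurd hx hvσ
      · exact h
  obtain ⟨heq, hinj⟩ := sd_image (lkv v C) (fun σ => insert v σ) hm
  exact ⟨_, by rw [lkv_sd _ _ hv, hB, heq], hinj⟩

lemma isComplex_iter (m : ℕ) (C : Finset (Finset ℕ)) (hC : IsComplex C) :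
    IsComplex (sd^[m] C) := by
  induction m with
  | zero => simpa using hC
  | succ m ih => rw [Function.iterate_succ_apply']; exact isComplex_sd _

lemma vertex_iter (m : ℕ) (C : Finset (Finset ℕ)) (v : ℕ) (h : ({v} : Finset ℕ) ∈ C) :
    ({vIter m v} : Finset ℕ) ∈ sd^[m] C := by
  induction m with
  | zero => simpa [vIter] using h
  | succ m ih =>
    rw [Function.iterate_succ_apply']
    exact singleton_mem_sd ih

lemma vIter_shift (m v : ℕ) : vIter (m + 1) v = vIter m (fenc {v}) := by
  induction m with
  | zero => rfl
  | succ m ih =>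
    show fenc {vIter (m + 1) v} = fenc {vIter m (fenc {v})}
    rw [ih]

lemma mapV_comp (g g' : ℕ → ℕ) (X : Finset (Finset ℕ)) :
    mapV g (mapV g' X) = mapV (fun x => g (g' x)) X := by
  simp [mapV, Finset.image_image, Function.comp_def]

lemma verts_mapV_mem {f : ℕ → ℕ} {D : Finset (Finset ℕ)} {x : ℕ} (h : x ∈ verts D) :
    f x ∈ verts (mapV f D) := by
  obtain ⟨σ, hσ, hx⟩ := h
  exact ⟨σ.image f, Finset.mem_image_of_mem _ hσ, Finset.mem_image_of_mem f hx⟩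

lemma lkv_iter (m : ℕ) : ∀ (C : Finset (Finset ℕ)) (v : ℕ), IsComplex C →
    ({v} : Finset ℕ) ∈ C →
    ∃ g, lkv (vIter m v) (sd^[m] C) = mapV g (sd^[m] (lkv v C)) ∧
      Set.InjOn g (verts (sd^[m] (lkv v C))) := by
  induction m with
  | zero =>
    intro C v _ _
    refine ⟨id, ?_, fun x _ y _ h => h⟩
    have hid : Finset.image (id : ℕ → ℕ) = id := funext fun s => Finset.image_id
    simp [mapV, vIter, hid]

  | succ m ih =>
    intro C v hC hv
    obtain ⟨g, hg, hginj⟩ := ih C v hC hv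
    have hD : IsComplex (sd^[m] C) := isComplex_iter m C hC
    have hw : ({vIter m v} : Finset ℕ) ∈ sd^[m] C := vertex_iter m C v hv
    obtain ⟨g₁, hg₁, hg₁inj⟩ := lkv_fenc_singleton (sd^[m] C) (vIter m v) hD hw
    obtain ⟨g₂, hg₂, hg₂inj⟩ := sd_mapV (sd^[m] (lkv v C)) g hginj
    refine ⟨fun x => g₁ (g₂ x), ?_, ?_⟩
    · rw [Function.iterate_succ_apply', Function.iterate_succ_apply']
      show lkv (fenc {vIter m v}) (sd (sd^[m] C)) = _
      rw [hg₁, hg, hg₂, mapV_comp]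
    · rw [Function.iterate_succ_apply']
      intro x hx y hy hxy
      have h2x : g₂ x ∈ verts (sd (lkv (vIter m v) (sd^[m] C))) := by
        rw [hg, hg₂]; exact verts_mapV_mem hx
      have h2y : g₂ y ∈ verts (sd (lkv (vIter m v) (sd^[m] C))) := by
        rw [hg, hg₂]; exact verts_mapV_mem hy
      exact hg₂inj hx hy (hg₁inj h2x h2y hxy)

lemma nonEvasive_sd : ∀ {C : Finset (Finset ℕ)}, NonEvasive C → IsComplex C →
    NonEvasive (sd C) := by
  intro C h
  induction h with
  | point v =>
    intro _
    have hpt : sd {({v} : Finset ℕ)} = {({fenc {v}} : Finset ℕ)} := by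
      ext T
      simp only [Finset.mem_singleton]
      constructor
      · intro hT
        obtain ⟨S, hS, hne, _, rfl⟩ := mem_sd.1 hT
        have : S = {({v} : Finset ℕ)} := by
          rcases Finset.subset_singleton_iff.1 hS with rfl | rfl
          · exact absurd hne (by simp)
          · rfl
        subst this
        simp
      · rintro rfl
        exact singleton_mem_sd (Finset.mem_singleton_self _)
    rw [hpt]
    exact NonEvasive.point _
  | step C v hv hlk hdel ihlk ihdel =>
    intro hC
    refine NonEvasive.step _ (fenc {v}) (singleton_mem_sd hv) ?_ ?_
    · obtain ⟨g, hgeq, hginj⟩ := lkv_fenc_singleton C v hC hv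
      rw [hgeq]
      exact relabel_nonEvasive (ihlk (complex_lkv v C hC)) g hginj
    · exact neRed_nonEvasive (core_red C v hC) (ihdel (complex_delv v C hC))

lemma neRed_sd : ∀ {C C' : Finset (Finset ℕ)}, IsComplex C → NERed C C' →
    NERed (sd C) (sd C') := by
  intro C C' hC h
  induction h with
  | refl => exact neRed_refl _
  | @tail b c hab hbc ih =>
    have hb : IsComplex b := neRed_isComplex hab hC
    obtain ⟨w, hw, hwlk, rfl⟩ := hbc
    have h1 : NEStep (sd b) (delv (fenc {w}) (sd b)) := by
      refine ⟨fenc {w}, singleton_mem_sd hw, ?_, rfl⟩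
      obtain ⟨g, hgeq, hginj⟩ := lkv_fenc_singleton b w hb hw
      rw [hgeq]
      exact relabel_nonEvasive (nonEvasive_sd hwlk (complex_lkv w b hb)) g hginj
    exact neRed_trans ih (neRed_head h1 (core_red b w hb))

lemma neRed_sd_iter (m : ℕ) : ∀ {C C' : Finset (Finset ℕ)}, IsComplex C → NERed C C' →
    NERed (sd^[m] C) (sd^[m] C') := by
  induction m with
  | zero => intro C C' _ h; simpa using h
  | succ m ih =>
    intro C C' hC h
    rw [Function.iterate_succ_apply, Function.iterate_succ_apply]
    exact ih (isComplex_sd C) (neRed_sd hC h)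

lemma part1 : ∀ (m : ℕ) (C : Finset (Finset ℕ)) (v : ℕ), IsComplex C →
    ({v} : Finset ℕ) ∈ C →
    NERed (delv (vIter m v) (sd^[m] C)) (sd^[m] (delv v C)) := by
  intro m
  induction m with
  | zero => intro C v _ _; exact neRed_refl _
  | succ m ih =>
    intro C v hC hv
    have h1 := ih (sd C) (fenc {v}) (isComplex_sd C) (singleton_mem_sd hv)
    have h2 : NERed (sd^[m] (delv (fenc {v}) (sd C))) (sd^[m] (sd (delv v C))) :=
      neRed_sd_iter m (complex_delv _ _ (isComplex_sd C)) (core_red C v hC)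
    rw [Function.iterate_succ_apply, Function.iterate_succ_apply, vIter_shift]
    exact neRed_trans h1 h2

/-- **Deletion and derived subdivision.** For a simplicial complex `C`, a vertex `v` of `C`
and `m ≥ 0`, the deletion of (the vertex corresponding to) `v` from the `m`-th derived
subdivision reduces by non-evasiveness steps to the `m`-th derived subdivision of the deletion:
`(sd^m C) − v ↘_NE sd^m (C − v)`.  Consequently, if `sd^m Lk(v,C)` is non-evasive, then
`sd^m C ↘_NE sd^m (C − v)`. -/
theorem sd_iterate_deletion (C : Finset (Finset ℕ)) (hC : IsComplex C)
    (v : ℕ) (hv : ({v} : Finset ℕ) ∈ C) (m : ℕ) :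
    NERed (delv (vIter m v) (sd^[m] C)) (sd^[m] (delv v C)) ∧
      (NonEvasive (sd^[m] (lkv v C)) → NERed (sd^[m] C) (sd^[m] (delv v C))) := by
  refine ⟨part1 m C v hC hv, ?_⟩
  intro hne
  obtain ⟨g, hgeq, hginj⟩ := lkv_iter m C v hC hv
  have hstep : NEStep (sd^[m] C) (delv (vIter m v) (sd^[m] C)) := by
    refine ⟨vIter m v, vertex_iter m C v hv, ?_, rfl⟩
    rw [hgeq]
    exact relabel_nonEvasive hne g hginj
  exact neRed_head hstep (part1 m C v hC hv)
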